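/- Let J ≥ 0 and C > 0 be constants and let (X_n)_{n≥1} be a process adapted to a filtration (F_n) with X_n ≥ 0 for all n, |X_{n+1} − X_n| ≤ C almost surely for all n, and E[X_{n+1} − X_n | F_n] ≤ 0 on the event {X_n > J} for all n. Then, almost surely, X_n ≤ J + √(6·C²·n·log n) for all sufficiently large n; in particular X_n = O(√(n·log n)) almost surely. -/

import Mathlib

open MeasureTheory Filter

private lemma exp_taylor_bound {x : ℝ} (hx : |x| ≤ 1/2) :
    Real.exp x ≤ 1 + x + (11/18) * x^2 := by
  have h1 : |x| ≤ 1 := hx.trans (by norm_num)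
  have h := Real.exp_bound h1 (n := 3) (by norm_num)
  have hsum : ∑ m ∈ Finset.range 3, x ^ m / (m.factorial : ℝ) = 1 + x + x^2/2 := by
    norm_num [Finset.sum_range_succ, Nat.factorial]
  rw [hsum] at h
  have h3 : |x|^3 ≤ (1/2) * x^2 := by
    have h4 : |x|^3 = |x| * x^2 := by rw [pow_succ, sq_abs]; ring
    rw [h4]
    nlinarith [sq_nonneg x, abs_nonneg x]
  have h4 := (abs_le.mp h).2
  have h5 : ((Nat.succ 3 : ℕ) : ℝ) / (((Nat.factorial 3 : ℕ) : ℝ) * ((3:ℕ):ℝ)) = 2/9 := by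
    norm_num [Nat.factorial]
  rw [h5] at h4
  nlinarith [h4, h3]
section PE

variable {Ω : Type*} {m0 : MeasurableSpace Ω}

/-- Truncated exponential test function. -/
private noncomputable def pe (X : ℕ → Ω → ℝ) (J : ℝ) (M : ℕ) (l : ℝ) (k : ℕ) (ω : Ω) : ℝ :=
  if X 1 ω ≤ (M : ℝ) then Real.exp (l * ((X k ω - J) ⊔ 0)) else 0

private lemma pe_nonneg (X : ℕ → Ω → ℝ) (J : ℝ) (M : ℕ) (l : ℝ) (k : ℕ) (ω : Ω) :
    0 ≤ pe X J M l k ω := by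
  unfold pe; split <;> positivity

private lemma pe_measurable (X : ℕ → Ω → ℝ) (hX : ∀ n, Measurable (X n))
    (J : ℝ) (M : ℕ) (l : ℝ) (k : ℕ) : Measurable (pe X J M l k) := by
  unfold pe
  exact Measurable.ite (measurableSet_le (hX 1) measurable_const)
    (Real.measurable_exp.comp ((((hX k).sub measurable_const).sup measurable_const).const_mul l))
    measurable_const

/-- a.e. growth bound for the underlying process on the event `{X 1 ≤ M}`. -/
private lemma X_ae_growth (μ : Measure Ω) (X : ℕ → Ω → ℝ) (C : ℝ)
    (hbdd : ∀ n : ℕ, 1 ≤ n → ∀ᵐ ω ∂μ, |X (n + 1) ω - X n ω| ≤ C) (M : ℕ) :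
    ∀ᵐ ω ∂μ, ∀ k : ℕ, 1 ≤ k → X 1 ω ≤ (M : ℝ) → X k ω ≤ (M : ℝ) + C * k := by
  have hb : ∀ᵐ ω ∂μ, ∀ n : ℕ, 1 ≤ n → |X (n + 1) ω - X n ω| ≤ C := by
    rw [ae_all_iff]
    intro n
    by_cases h : 1 ≤ n
    · exact (hbdd n h).mono fun ω hω _ => hω
    · exact ae_of_all _ fun ω h' => absurd h' h
  filter_upwards [hb] with ω hω
  intro k hk hI
  induction k, hk using Nat.le_induction with
  | base =>
      have hC0 : 0 ≤ C := le_trans (abs_nonneg _) (hω 1 le_rfl)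
      push_cast; nlinarith
  | succ k hk ih =>
      have h1 := (abs_le.mp (hω k hk)).2
      push_cast at ih ⊢
      nlinarith [ih]

private lemma pe_ae_bound (μ : Measure Ω) (X : ℕ → Ω → ℝ) (J C : ℝ) (hJ : 0 ≤ J)
    (hbdd : ∀ n : ℕ, 1 ≤ n → ∀ᵐ ω ∂μ, |X (n + 1) ω - X n ω| ≤ C)
    (M : ℕ) (l : ℝ) (hl0 : 0 ≤ l) (hC : 0 < C) :
    ∀ᵐ ω ∂μ, ∀ k : ℕ, 1 ≤ k → pe X J M l k ω ≤ Real.exp (l * ((M : ℝ) + C * k)) := by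
  filter_upwards [X_ae_growth μ X C hbdd M] with ω hω k hk
  unfold pe
  split
  · next hI =>
      apply Real.exp_le_exp.mpr
      apply mul_le_mul_of_nonneg_left _ hl0
      have h1 : X k ω ≤ (M : ℝ) + C * k := hω k hk hI
      have h2 : (0:ℝ) ≤ (M : ℝ) + C * k := by positivity
      simp only [sup_le_iff]
      constructor <;> nlinarith
  · positivity

private lemma pe_integrable (μ : Measure Ω) [IsProbabilityMeasure μ]
    (X : ℕ → Ω → ℝ) (hX : ∀ n, Measurable (X n)) (J C : ℝ) (hJ : 0 ≤ J)
    (hbdd : ∀ n : ℕ, 1 ≤ n → ∀ᵐ ω ∂μ, |X (n + 1) ω - X n ω| ≤ C)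
    (M : ℕ) (l : ℝ) (hl0 : 0 ≤ l) (hC : 0 < C) (k : ℕ) (hk : 1 ≤ k) :
    Integrable (pe X J M l k) μ := by
  refine (integrable_const (Real.exp (l * ((M : ℝ) + C * k)))).mono'
    (pe_measurable X hX J M l k).aestronglyMeasurable ?_
  filter_upwards [pe_ae_bound μ X J C hJ hbdd M l hl0 hC] with ω hω
  rw [Real.norm_eq_abs, abs_of_nonneg (pe_nonneg X J M l k ω)]
  exact hω k hk

end PE

section Step

variable {Ω : Type*} {m0 : MeasurableSpace Ω}

private lemma pe_step (μ : Measure Ω) [IsProbabilityMeasure μ] (F : Filtration ℕ m0)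
    (X : ℕ → Ω → ℝ) (hadapt : Adapted F X) (J C : ℝ) (hJ : 0 ≤ J) (hC : 0 < C)
    (hbdd : ∀ n : ℕ, 1 ≤ n → ∀ᵐ ω ∂μ, |X (n + 1) ω - X n ω| ≤ C)
    (hdrift : ∀ n : ℕ, 1 ≤ n → ∀ᵐ ω ∂μ,
      J < X n ω → (μ[(fun ω' => X (n + 1) ω' - X n ω') | F n]) ω ≤ 0)
    (M : ℕ) (l : ℝ) (hl0 : 0 ≤ l) (hlC : l * C ≤ 1/2) (k : ℕ) (hk : 1 ≤ k) :
    ∫ ω, pe X J M l (k+1) ω ∂μ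
      ≤ (1 + (11/18) * (l*C)^2) * ∫ ω, pe X J M l k ω ∂μ + 2 := by
  have hX : ∀ n, Measurable (X n) := fun n => (hadapt n).mono (F.le n) le_rfl
  set A : Set Ω := {ω | X 1 ω ≤ (M : ℝ) ∧ J < X k ω} with hA_def
  have hA : MeasurableSet[F k] A := by
    have h1 : Measurable[F k] (X 1) := (hadapt 1).mono (F.mono hk) le_rfl
    have h2 : Measurable[F k] (X k) := hadapt k
    exact (measurableSet_le h1 measurable_const).inter (measurableSet_lt measurable_const h2)
  have hAm0 : MeasurableSet A :=
    (measurableSet_le (hX 1) measurable_const).inter (measurableSet_lt measurable_const (hX k))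
  set Y : Ω → ℝ := A.indicator (fun ω => Real.exp (l * (X k ω - J))) with hY_def
  set Δ : Ω → ℝ := fun ω' => X (k + 1) ω' - X k ω' with hΔ_def
  have hY0 : ∀ ω, 0 ≤ Y ω := fun ω => Set.indicator_nonneg (fun ω _ => (Real.exp_pos _).le) ω
  have hYsm : StronglyMeasurable[F k] Y := by
    refine StronglyMeasurable.indicator ?_ hA
    exact (Real.measurable_exp.comp
      (((hadapt k).sub measurable_const).const_mul l)).stronglyMeasurable
  have hYmeas : Measurable Y :=
    ((Real.measurable_exp.comp (((hX k).sub measurable_const).const_mul l)).indicator hAm0)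
  set B : ℝ := Real.exp (l * ((M : ℝ) + C * k)) with hB_def
  have hYb : ∀ᵐ ω ∂μ, Y ω ≤ B := by
    filter_upwards [pe_ae_bound μ X J C hJ hbdd M l hl0 hC] with ω hω
    rw [hY_def]
    by_cases hmem : ω ∈ A
    · rw [Set.indicator_of_mem hmem]
      have h1 : Real.exp (l * (X k ω - J)) ≤ Real.exp (l * ((X k ω - J) ⊔ 0)) := by
        apply Real.exp_le_exp.mpr
        exact mul_le_mul_of_nonneg_left le_sup_left hl0
      have h2 : pe X J M l k ω = Real.exp (l * ((X k ω - J) ⊔ 0)) := if_pos hmem.1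
      calc Real.exp (l * (X k ω - J)) ≤ pe X J M l k ω := h2 ▸ h1
        _ ≤ B := hω k hk
    · rw [Set.indicator_of_notMem hmem]; positivity
  have hΔb : ∀ᵐ ω ∂μ, |Δ ω| ≤ C := hbdd k hk
  have hΔmeas : Measurable Δ := (hX (k+1)).sub (hX k)
  have hΔint : Integrable Δ μ := by
    refine (integrable_const C).mono' hΔmeas.aestronglyMeasurable ?_
    filter_upwards [hΔb] with ω hω using by rwa [Real.norm_eq_abs]
  have hYint : Integrable Y μ := by
    refine (integrable_const B).mono' hYmeas.aestronglyMeasurable ?_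
    filter_upwards [hYb] with ω hω
    rw [Real.norm_eq_abs, abs_of_nonneg (hY0 ω)]; exact hω
  have hYΔint : Integrable (Y * Δ) μ := by
    refine (integrable_const (B * C)).mono' (hYmeas.mul hΔmeas).aestronglyMeasurable ?_
    filter_upwards [hYb, hΔb] with ω h1 h2
    rw [Pi.mul_apply, Real.norm_eq_abs, abs_mul, abs_of_nonneg (hY0 ω)]
    have hB0 : 0 ≤ B := (Real.exp_pos _).le
    exact mul_le_mul h1 h2 (abs_nonneg _) hB0
  -- key: ∫ Y·Δ ≤ 0
  have hkey : ∫ ω, Y ω * Δ ω ∂μ ≤ 0 := by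
    have h1 : μ[Y * Δ | F k] =ᵐ[μ] Y * μ[Δ | F k] :=
      condExp_mul_of_stronglyMeasurable_left hYsm hYΔint hΔint
    have h2 : ∫ ω, Y ω * Δ ω ∂μ = ∫ ω, (Y * μ[Δ | F k]) ω ∂μ := by
      calc ∫ ω, Y ω * Δ ω ∂μ = ∫ ω, (Y * Δ) ω ∂μ := by simp only [Pi.mul_apply]
        _ = ∫ ω, (μ[Y * Δ | F k]) ω ∂μ := (integral_condExp (F.le k)).symm
        _ = ∫ ω, (Y * μ[Δ | F k]) ω ∂μ := integral_congr_ae h1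
    rw [h2]
    apply integral_nonpos_of_ae
    filter_upwards [hdrift k hk] with ω hd
    by_cases hmem : ω ∈ A
    · have hcond : (μ[Δ | F k]) ω ≤ 0 := hd hmem.2
      exact mul_nonpos_of_nonneg_of_nonpos (hY0 ω) hcond
    · simp [hY_def, Set.indicator_of_notMem hmem]
  -- ∫ Y ≤ ∫ pe k
  have hYle : ∫ ω, Y ω ∂μ ≤ ∫ ω, pe X J M l k ω ∂μ := by
    apply integral_mono hYint (pe_integrable μ X hX J C hJ hbdd M l hl0 hC k hk)
    intro ω
    rw [hY_def]
    by_cases hmem : ω ∈ A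
    · rw [Set.indicator_of_mem hmem]
      unfold pe
      rw [if_pos hmem.1]
      exact Real.exp_le_exp.mpr (mul_le_mul_of_nonneg_left le_sup_left hl0)
    · rw [Set.indicator_of_notMem hmem]; exact pe_nonneg X J M l k ω
  -- pointwise: pe (k+1) ≤ Y * exp(lΔ) + 2 a.e.
  have hexp_half : Real.exp (l * C) ≤ 2 := by
    calc Real.exp (l * C) ≤ Real.exp (1/2) := Real.exp_le_exp.mpr hlC
      _ ≤ 2 := by
        have h := Real.exp_one_lt_d9
        have h2 : Real.exp (1/2) * Real.exp (1/2) = Real.exp 1 := by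
          rw [← Real.exp_add]; norm_num
        nlinarith [Real.exp_pos (1/2:ℝ)]
  have hptwise : ∀ᵐ ω ∂μ, pe X J M l (k+1) ω ≤ Y ω * Real.exp (l * Δ ω) + 2 := by
    filter_upwards [hΔb] with ω hΔω
    have hYe0 : 0 ≤ Y ω * Real.exp (l * Δ ω) := mul_nonneg (hY0 ω) (Real.exp_pos _).le
    unfold pe
    split
    · next hI =>
        by_cases hXk : J < X k ω
        · have hmem : ω ∈ A := ⟨hI, hXk⟩
          have hY : Y ω = Real.exp (l * (X k ω - J)) := Set.indicator_of_mem hmem _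
          have hprod : Y ω * Real.exp (l * Δ ω) = Real.exp (l * (X (k+1) ω - J)) := by
            rw [hY, ← Real.exp_add]
            congr 1
            rw [hΔ_def]
            ring
          rcases le_or_gt (X (k+1) ω - J) 0 with h | h
          · rw [sup_eq_right.mpr h]
            simp only [mul_zero, Real.exp_zero]
            linarith
          · rw [sup_eq_left.mpr h.le, ← hprod]
            linarith
        · -- X k ≤ J, so X (k+1) - J ≤ C
          push_neg at hXk
          have h1 : X (k+1) ω - J ≤ C := by
            have := (abs_le.mp hΔω).2
            rw [hΔ_def] at this
            simp only at this
            linarith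
          have h2 : Real.exp (l * ((X (k+1) ω - J) ⊔ 0)) ≤ Real.exp (l * C) := by
            apply Real.exp_le_exp.mpr
            apply mul_le_mul_of_nonneg_left _ hl0
            exact sup_le h1 hC.le
          linarith [hexp_half]
    · positivity
  have hYeint : Integrable (fun ω => Y ω * Real.exp (l * Δ ω)) μ := by
    refine (integrable_const (B * 2)).mono'
      ((hYmeas.mul (Real.measurable_exp.comp (hΔmeas.const_mul l))).aestronglyMeasurable) ?_
    filter_upwards [hYb, hΔb] with ω h1 h2
    rw [Real.norm_eq_abs, abs_mul, abs_of_nonneg (hY0 ω),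
      abs_of_nonneg (Real.exp_pos _).le]
    have h3 : Real.exp (l * Δ ω) ≤ 2 := by
      refine le_trans ?_ hexp_half
      apply Real.exp_le_exp.mpr
      have : l * Δ ω ≤ l * |Δ ω| := mul_le_mul_of_nonneg_left (le_abs_self _) hl0
      nlinarith
    have hB0 : 0 ≤ B := (Real.exp_pos _).le
    exact mul_le_mul h1 h3 (Real.exp_pos _).le hB0
  have hstep1 : ∫ ω, pe X J M l (k+1) ω ∂μ
      ≤ ∫ ω, (Y ω * Real.exp (l * Δ ω) + 2) ∂μ := by
    apply integral_mono_ae (pe_integrable μ X hX J C hJ hbdd M l hl0 hC (k+1) (by omega))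
      (hYeint.add (integrable_const 2)) hptwise
  have hstep2 : ∫ ω, (Y ω * Real.exp (l * Δ ω) + 2) ∂μ
      = ∫ ω, Y ω * Real.exp (l * Δ ω) ∂μ + 2 := by
    rw [integral_add hYeint (integrable_const 2), integral_const]
    simp
  -- Taylor bound
  have htaylor : ∀ᵐ ω ∂μ, Y ω * Real.exp (l * Δ ω)
      ≤ (1 + (11/18) * (l*C)^2) * Y ω + l * (Y ω * Δ ω) := by
    filter_upwards [hΔb] with ω hΔω
    have habs : |l * Δ ω| ≤ 1/2 := by
      rw [abs_mul, abs_of_nonneg hl0]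
      calc l * |Δ ω| ≤ l * C := mul_le_mul_of_nonneg_left hΔω hl0
        _ ≤ 1/2 := hlC
    have h1 : Real.exp (l * Δ ω) ≤ 1 + l * Δ ω + (11/18) * (l * Δ ω)^2 :=
      exp_taylor_bound habs
    have habs2 : |l * Δ ω| ≤ l * C := by
      rw [abs_mul, abs_of_nonneg hl0]
      exact mul_le_mul_of_nonneg_left hΔω hl0
    have h2 : (l * Δ ω)^2 ≤ (l * C)^2 := by
      have h3 := abs_le.mp habs2
      nlinarith [h3.1, h3.2]
    calc Y ω * Real.exp (l * Δ ω)
        ≤ Y ω * (1 + l * Δ ω + (11/18) * (l * Δ ω)^2) :=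
          mul_le_mul_of_nonneg_left h1 (hY0 ω)
      _ = Y ω + l * (Y ω * Δ ω) + (11/18) * (Y ω * (l * Δ ω)^2) := by ring
      _ ≤ Y ω + l * (Y ω * Δ ω) + (11/18) * (Y ω * (l * C)^2) :=
          add_le_add_right (mul_le_mul_of_nonneg_left
            (mul_le_mul_of_nonneg_left h2 (hY0 ω)) (by norm_num)) _
      _ = (1 + (11/18) * (l*C)^2) * Y ω + l * (Y ω * Δ ω) := by ring
  have ha : Integrable (fun ω => (1 + (11/18) * (l*C)^2) * Y ω) μ := hYint.const_mul _
  have hb : Integrable (fun ω => l * (Y ω * Δ ω)) μ := by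
    have := hYΔint.const_mul l
    simpa [Pi.mul_apply] using this
  have hRHSint : Integrable (fun ω => (1 + (11/18) * (l*C)^2) * Y ω + l * (Y ω * Δ ω)) μ :=
    ha.add hb
  have hstep3 : ∫ ω, Y ω * Real.exp (l * Δ ω) ∂μ
      ≤ (1 + (11/18) * (l*C)^2) * ∫ ω, Y ω ∂μ + l * ∫ ω, Y ω * Δ ω ∂μ := by
    calc ∫ ω, Y ω * Real.exp (l * Δ ω) ∂μ
        ≤ ∫ ω, ((1 + (11/18) * (l*C)^2) * Y ω + l * (Y ω * Δ ω)) ∂μ :=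
          integral_mono_ae hYeint hRHSint htaylor
      _ = (1 + (11/18) * (l*C)^2) * ∫ ω, Y ω ∂μ + l * ∫ ω, Y ω * Δ ω ∂μ := by
          rw [integral_add ha hb, integral_const_mul, integral_const_mul]
  have hg0 : (0:ℝ) ≤ 1 + (11/18) * (l*C)^2 := by positivity
  have hfin : l * ∫ ω, Y ω * Δ ω ∂μ ≤ 0 := mul_nonpos_of_nonneg_of_nonpos hl0 hkey
  calc ∫ ω, pe X J M l (k+1) ω ∂μ
      ≤ ∫ ω, Y ω * Real.exp (l * Δ ω) ∂μ + 2 := hstep1.trans (le_of_eq hstep2)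
    _ ≤ (1 + (11/18) * (l*C)^2) * ∫ ω, Y ω ∂μ + l * ∫ ω, Y ω * Δ ω ∂μ + 2 := by linarith
    _ ≤ (1 + (11/18) * (l*C)^2) * ∫ ω, pe X J M l k ω ∂μ + 2 := by
        nlinarith [mul_le_mul_of_nonneg_left hYle hg0]

end Step

section Total

variable {Ω : Type*} {m0 : MeasurableSpace Ω}

private lemma pe_total (μ : Measure Ω) [IsProbabilityMeasure μ] (F : Filtration ℕ m0)
    (X : ℕ → Ω → ℝ) (hadapt : Adapted F X) (J C : ℝ) (hJ : 0 ≤ J) (hC : 0 < C)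
    (hbdd : ∀ n : ℕ, 1 ≤ n → ∀ᵐ ω ∂μ, |X (n + 1) ω - X n ω| ≤ C)
    (hdrift : ∀ n : ℕ, 1 ≤ n → ∀ᵐ ω ∂μ,
      J < X n ω → (μ[(fun ω' => X (n + 1) ω' - X n ω') | F n]) ω ≤ 0)
    (M : ℕ) (l : ℝ) (hl0 : 0 ≤ l) (hlC : l * C ≤ 1/2) (n : ℕ) (hn : 1 ≤ n) :
    ∫ ω, pe X J M l n ω ∂μ
      ≤ (Real.exp (l * M) + 2 * n) * (1 + (11/18) * (l*C)^2)^n := by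
  have hX : ∀ m, Measurable (X m) := fun m => (hadapt m).mono (F.le m) le_rfl
  have hg1 : (1:ℝ) ≤ 1 + (11/18)*(l*C)^2 := by nlinarith [sq_nonneg (l*C)]
  have hg0 : (0:ℝ) ≤ 1 + (11/18)*(l*C)^2 := by linarith
  induction n, hn using Nat.le_induction with
  | base =>
      have h1 : ∫ ω, pe X J M l 1 ω ∂μ ≤ Real.exp (l * M) := by
        calc ∫ ω, pe X J M l 1 ω ∂μ ≤ ∫ _ω, Real.exp (l * (M:ℝ)) ∂μ := by
              apply integral_mono (pe_integrable μ X hX J C hJ hbdd M l hl0 hC 1 le_rfl)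
                (integrable_const _)
              intro ω
              unfold pe
              split
              · next hI =>
                  apply Real.exp_le_exp.mpr
                  apply mul_le_mul_of_nonneg_left _ hl0
                  have hM0 : (0:ℝ) ≤ (M:ℝ) := Nat.cast_nonneg M
                  simp only [sup_le_iff]
                  constructor <;> linarith
              · positivity
          _ = Real.exp (l * (M:ℝ)) := by rw [integral_const]; simp
      have hpow : (1:ℝ) ≤ (1 + (11/18)*(l*C)^2)^1 := by simpa using hg1
      nlinarith [Real.exp_pos (l * (M:ℝ)), h1, hpow]
  | succ k hk ih =>
      have hstep := pe_step μ F X hadapt J C hJ hC hbdd hdrift M l hl0 hlC k hk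
      have hpowk : (1:ℝ) ≤ (1 + (11/18)*(l*C)^2)^(k+1) := one_le_pow₀ hg1
      have hpow0 : (0:ℝ) ≤ (1 + (11/18)*(l*C)^2)^k := pow_nonneg hg0 k
      have h2 : (1 + (11/18)*(l*C)^2) * ∫ ω, pe X J M l k ω ∂μ
          ≤ (1 + (11/18)*(l*C)^2) * ((Real.exp (l * M) + 2 * k) * (1 + (11/18)*(l*C)^2)^k) :=
        mul_le_mul_of_nonneg_left ih hg0
      have h3 : (1 + (11/18)*(l*C)^2) * ((Real.exp (l * M) + 2 * k) * (1 + (11/18)*(l*C)^2)^k)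
          = (Real.exp (l * M) + 2 * k) * (1 + (11/18)*(l*C)^2)^(k+1) := by
        rw [pow_succ]; ring
      have h4 : (Real.exp (l * M) + 2 * (k:ℝ)) * (1 + (11/18)*(l*C)^2)^(k+1) + 2
          ≤ (Real.exp (l * M) + 2 * ((k:ℕ):ℝ) + 2) * (1 + (11/18)*(l*C)^2)^(k+1) := by
        have he : (0:ℝ) < Real.exp (l * M) := Real.exp_pos _
        nlinarith [hpowk]
      push_cast
      push_cast at ih h2 h3 h4
      nlinarith [hstep, h2, h3, h4]

private lemma pe_markov (μ : Measure Ω) [IsProbabilityMeasure μ]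
    (X : ℕ → Ω → ℝ) (hX : ∀ m, Measurable (X m)) (J C : ℝ) (hJ : 0 ≤ J) (hC : 0 < C)
    (hbdd : ∀ n : ℕ, 1 ≤ n → ∀ᵐ ω ∂μ, |X (n + 1) ω - X n ω| ≤ C)
    (M : ℕ) (l a : ℝ) (hl0 : 0 ≤ l) (n : ℕ) (hn : 1 ≤ n) :
    Real.exp (l * a) * (μ {ω | X 1 ω ≤ (M:ℝ) ∧ J + a < X n ω}).toReal
      ≤ ∫ ω, pe X J M l n ω ∂μ := by
  set E : Set Ω := {ω | X 1 ω ≤ (M:ℝ) ∧ J + a < X n ω} with hE_def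
  have hEm : MeasurableSet E :=
    (measurableSet_le (hX 1) measurable_const).inter
      (measurableSet_lt measurable_const (hX n))
  have hpi := pe_integrable μ X hX J C hJ hbdd M l hl0 hC n hn
  calc Real.exp (l * a) * (μ E).toReal
      = ∫ _ω in E, Real.exp (l * a) ∂μ := by rw [setIntegral_const, smul_eq_mul, measureReal_def]; ring
    _ ≤ ∫ ω in E, pe X J M l n ω ∂μ := by
        apply setIntegral_mono_on (integrableOn_const (measure_ne_top μ E))
          hpi.integrableOn hEm
        intro ω hω
        unfold pe
        rw [if_pos hω.1]
        apply Real.exp_le_exp.mpr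
        apply mul_le_mul_of_nonneg_left _ hl0
        have h2 := hω.2
        calc a ≤ X n ω - J := by linarith
          _ ≤ (X n ω - J) ⊔ 0 := le_sup_left
    _ ≤ ∫ ω, pe X J M l n ω ∂μ :=
        setIntegral_le_integral hpi (ae_of_all _ (pe_nonneg X J M l n))

end Total

section Bound

variable {Ω : Type*} {m0 : MeasurableSpace Ω}

set_option maxHeartbeats 1000000 in
private lemma measure_bound (μ : Measure Ω) [IsProbabilityMeasure μ] (F : Filtration ℕ m0)
    (X : ℕ → Ω → ℝ) (hadapt : Adapted F X) (J C : ℝ) (hJ : 0 ≤ J) (hC : 0 < C)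
    (hbdd : ∀ n : ℕ, 1 ≤ n → ∀ᵐ ω ∂μ, |X (n + 1) ω - X n ω| ≤ C)
    (hdrift : ∀ n : ℕ, 1 ≤ n → ∀ᵐ ω ∂μ,
      J < X n ω → (μ[(fun ω' => X (n + 1) ω' - X n ω') | F n]) ω ≤ 0)
    (M n : ℕ) (hn : 1024 ≤ n) :
    (μ {ω | X 1 ω ≤ (M:ℝ) ∧ J + Real.sqrt (6 * C^2 * n * Real.log n) < X n ω}).toReal
      ≤ (Real.exp ((M:ℝ)/(2*C)) + 2) * (n:ℝ) ^ (-(7/5) : ℝ) := by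
  have hX : ∀ m, Measurable (X m) := fun m => (hadapt m).mono (F.le m) le_rfl
  have hn1 : 1 ≤ n := by omega
  have hnR : (1:ℝ) ≤ (n:ℝ) := by exact_mod_cast hn1
  have hnR0 : (0:ℝ) < (n:ℝ) := by linarith
  have hnne : (n:ℝ) ≠ 0 := ne_of_gt hnR0
  have hlog0 : 0 ≤ Real.log n := Real.log_nonneg hnR
  set s : ℝ := Real.sqrt (Real.log n / n) with hs_def
  have hs0 : 0 ≤ s := Real.sqrt_nonneg _
  -- s ≤ 1/4
  have hsqn : (32:ℝ) ≤ Real.sqrt n := by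
    rw [show (32:ℝ) = Real.sqrt (32^2) by rw [Real.sqrt_sq]; norm_num]
    apply Real.sqrt_le_sqrt
    norm_num
    exact_mod_cast hn
  have hsqrtn_pos : (0:ℝ) < Real.sqrt n := by linarith
  have hlogle : Real.log n ≤ 2 * Real.sqrt n := by
    have h1 : Real.log (Real.sqrt n) ≤ Real.sqrt n - 1 :=
      Real.log_le_sub_one_of_pos hsqrtn_pos
    have h2 : Real.log (Real.sqrt n) = Real.log n / 2 := Real.log_sqrt hnR0.le
    linarith [h2 ▸ h1]
  have hfrac : Real.log n / n ≤ 1/16 := by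
    have hnsq : (n:ℝ) = Real.sqrt n * Real.sqrt n := (Real.mul_self_sqrt hnR0.le).symm
    rw [div_le_iff₀ hnR0]
    calc Real.log n ≤ 2 * Real.sqrt n := hlogle
      _ ≤ 1/16 * (Real.sqrt n * Real.sqrt n) := by nlinarith [hsqn]
      _ = 1/16 * n := by rw [← hnsq]
  have hs14 : s ≤ 1/4 := by
    rw [hs_def, show (1/4 : ℝ) = Real.sqrt (1/16) by
      rw [show (1/16:ℝ) = (1/4)^2 by norm_num, Real.sqrt_sq]; norm_num]
    exact Real.sqrt_le_sqrt hfrac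
  set l : ℝ := 2 * s / C with hl_def
  set a : ℝ := Real.sqrt (6 * C^2 * n * Real.log n) with ha_def
  have hl0 : 0 ≤ l := by positivity
  have hlCeq : l * C = 2 * s := by
    rw [hl_def]
    exact div_mul_cancel₀ (2*s) (ne_of_gt hC)
  have hlC : l * C ≤ 1/2 := by rw [hlCeq]; linarith
  -- l * a = 2 * √6 * log n
  have hsq_s : s^2 = Real.log n / n := Real.sq_sqrt (by positivity)
  have hla : l * a = 2 * Real.sqrt 6 * Real.log n := by
    have e2 : s * a = Real.sqrt ((Real.log n / n) * (6 * C^2 * n * Real.log n)) := by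
      rw [hs_def, ha_def, ← Real.sqrt_mul (by positivity)]
    have e3 : (Real.log n / n) * (6 * C^2 * n * Real.log n) = (C * Real.log n)^2 * 6 := by
      field_simp
    have e4 : Real.sqrt ((C * Real.log n)^2 * 6) = C * Real.log n * Real.sqrt 6 := by
      rw [Real.sqrt_mul (sq_nonneg _), Real.sqrt_sq (by positivity)]
    have e5 : s * a = C * Real.log n * Real.sqrt 6 := by rw [e2, e3, e4]
    rw [hl_def]
    field_simp
    nlinarith [e5]
  -- (l*C)^2 = 4 log n / n
  have hlC2 : (l*C)^2 = 4 * (Real.log n / n) := by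
    rw [hlCeq]
    nlinarith [hsq_s]
  set g : ℝ := 1 + (11/18) * (l*C)^2 with hg_def
  have hg1 : (1:ℝ) ≤ g := by rw [hg_def]; nlinarith [sq_nonneg (l*C)]
  have hg0 : (0:ℝ) ≤ g := by linarith
  set E : Set Ω := {ω | X 1 ω ≤ (M:ℝ) ∧ J + a < X n ω} with hE_def
  have hmark := pe_markov μ X hX J C hJ hC hbdd M l a hl0 n hn1
  have htot := pe_total μ F X hadapt J C hJ hC hbdd hdrift M l hl0 hlC n hn1
  set R : ℝ := Real.exp (l * M) + 2 * n with hR_def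
  have hRg : Real.exp (l * a) * (μ E).toReal ≤ R * g^n := le_trans hmark htot
  have hepos : (0:ℝ) < Real.exp (l * a) := Real.exp_pos _
  have hT : (μ E).toReal ≤ Real.exp (-(l * a)) * (R * g^n) := by
    rw [Real.exp_neg]
    rw [inv_mul_eq_div, le_div_iff₀ hepos]
    calc (μ E).toReal * Real.exp (l*a) = Real.exp (l*a) * (μ E).toReal := by ring
      _ ≤ R * g^n := hRg
  -- bound g^n
  have hgn : g^n ≤ Real.exp ((22/9) * Real.log n) := by
    have h1 : g ≤ Real.exp ((11/18) * (l*C)^2) := by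
      have := Real.add_one_le_exp ((11/18) * (l*C)^2)
      rw [hg_def]; linarith
    have h2 : g^n ≤ (Real.exp ((11/18) * (l*C)^2))^n := pow_le_pow_left₀ hg0 h1 n
    rw [← Real.exp_nat_mul] at h2
    have h3 : (n:ℝ) * ((11/18) * (l*C)^2) = (22/9) * Real.log n := by
      rw [hlC2]; field_simp; ring
    rwa [h3] at h2
  -- bound R
  have hK0 : (0:ℝ) < Real.exp ((M:ℝ)/(2*C)) := Real.exp_pos _
  have hR : R ≤ (Real.exp ((M:ℝ)/(2*C)) + 2) * n := by
    have h1 : l * (M:ℝ) ≤ (M:ℝ)/(2*C) := by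
      have hl12 : l ≤ 1/(2*C) := by
        rw [hl_def, div_le_div_iff₀ hC (by linarith)]
        nlinarith [hs14]
      have hM0 : (0:ℝ) ≤ (M:ℝ) := Nat.cast_nonneg M
      calc l * (M:ℝ) ≤ (1/(2*C)) * (M:ℝ) := mul_le_mul_of_nonneg_right hl12 hM0
        _ = (M:ℝ)/(2*C) := by ring
    have h2 : Real.exp (l * M) ≤ Real.exp ((M:ℝ)/(2*C)) := Real.exp_le_exp.mpr h1
    rw [hR_def]
    nlinarith [h2, hnR, hK0]
  -- combine
  have hgn0 : (0:ℝ) ≤ g^n := pow_nonneg hg0 n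
  have hfinal : (μ E).toReal
      ≤ Real.exp (-(2 * Real.sqrt 6 * Real.log n)) *
          (((Real.exp ((M:ℝ)/(2*C)) + 2) * n) * Real.exp ((22/9) * Real.log n)) := by
    rw [← hla]
    refine hT.trans (mul_le_mul_of_nonneg_left ?_ (Real.exp_pos _).le)
    exact mul_le_mul hR hgn hgn0 (by positivity)
  -- numeric exponent computation
  have hs6 : (218/45 : ℝ) ≤ 2 * Real.sqrt 6 := by
    nlinarith [Real.sq_sqrt (show (0:ℝ) ≤ 6 by norm_num), Real.sqrt_nonneg 6]
  set L : ℝ := Real.log n with hL_def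
  set K : ℝ := Real.exp ((M:ℝ)/(2*C)) + 2 with hK_def
  have hK0' : (0:ℝ) ≤ K := by rw [hK_def]; positivity
  have hnexp : (n:ℝ) = Real.exp L := (Real.exp_log hnR0).symm
  have hcollapse : Real.exp (-(2 * Real.sqrt 6 * L)) * ((K * n) * Real.exp ((22/9) * L))
      = K * Real.exp ((1 + 22/9 - 2 * Real.sqrt 6) * L) := by
    calc Real.exp (-(2 * Real.sqrt 6 * L)) * ((K * n) * Real.exp ((22/9) * L))
        = K * ((n:ℝ) * (Real.exp (-(2 * Real.sqrt 6 * L)) * Real.exp ((22/9) * L))) := by ring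
      _ = K * (Real.exp L * Real.exp (-(2 * Real.sqrt 6 * L) + (22/9) * L)) := by
          rw [← Real.exp_add, hnexp]
      _ = K * Real.exp (L + (-(2 * Real.sqrt 6 * L) + (22/9) * L)) := by rw [← Real.exp_add]
      _ = K * Real.exp ((1 + 22/9 - 2 * Real.sqrt 6) * L) := by ring_nf
  have hexple : Real.exp ((1 + 22/9 - 2 * Real.sqrt 6) * L)
      ≤ Real.exp ((-(7/5)) * L) := by
    apply Real.exp_le_exp.mpr
    apply mul_le_mul_of_nonneg_right _ hlog0
    linarith [hs6]
  have hrpow : (n:ℝ) ^ (-(7/5) : ℝ) = Real.exp ((-(7/5)) * L) := by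
    rw [Real.rpow_def_of_pos hnR0, mul_comm, ← hL_def]
  calc (μ E).toReal
      ≤ K * Real.exp ((1 + 22/9 - 2 * Real.sqrt 6) * L) := by
        rw [← hcollapse]; exact hfinal
    _ ≤ K * Real.exp ((-(7/5)) * L) := mul_le_mul_of_nonneg_left hexple hK0'
    _ = K * (n:ℝ) ^ (-(7/5) : ℝ) := by rw [hrpow]

end Bound

/-- Almost-sure version of the Pemantle–Rosenthal moment bound: if a
nonnegative adapted process has bounded increments and nonpositive conditional drift above
the level `J`, then almost surely `X n ≤ J + √(6·C²·n·log n)` for all sufficiently large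
`n`; in particular `X n = O(√(n·log n))` almost surely. -/
theorem nonneg_drift_process_sqrt_log_bound
    {Ω : Type*} {m0 : MeasurableSpace Ω} (μ : Measure Ω) [IsProbabilityMeasure μ]
    (F : Filtration ℕ m0) (X : ℕ → Ω → ℝ) (hadapt : Adapted F X)
    (J C : ℝ) (hJ : 0 ≤ J) (hC : 0 < C)
    (hnonneg : ∀ᵐ ω ∂μ, ∀ n : ℕ, 1 ≤ n → 0 ≤ X n ω)
    (hbdd : ∀ n : ℕ, 1 ≤ n → ∀ᵐ ω ∂μ, |X (n + 1) ω - X n ω| ≤ C)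
    (hdrift : ∀ n : ℕ, 1 ≤ n → ∀ᵐ ω ∂μ,
      J < X n ω → (μ[(fun ω' => X (n + 1) ω' - X n ω') | F n]) ω ≤ 0) :
    ∀ᵐ ω ∂μ, ∀ᶠ n : ℕ in atTop,
      X n ω ≤ J + Real.sqrt (6 * C ^ 2 * n * Real.log n) := by
  have hX : ∀ m, Measurable (X m) := fun m => (hadapt m).mono (F.le m) le_rfl
  set Ev : ℕ → ℕ → Set Ω := fun M n =>
    {ω | X 1 ω ≤ (M:ℝ) ∧ J + Real.sqrt (6 * C ^ 2 * n * Real.log n) < X n ω} with hEv_def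
  have htsum : ∀ M : ℕ, ∑' n, μ (Ev M n) ≠ ⊤ := by
    intro M
    have hKpos : (0:ℝ) ≤ Real.exp ((M:ℝ)/(2*C)) + 2 := by positivity
    have hsummable : Summable
        (fun n : ℕ => (Real.exp ((M:ℝ)/(2*C)) + 2) * (n:ℝ) ^ (-(7/5) : ℝ)) :=
      (Real.summable_nat_rpow.mpr (by norm_num)).mul_left _
    have hnn : ∀ n : ℕ, 0 ≤ (Real.exp ((M:ℝ)/(2*C)) + 2) * (n:ℝ) ^ (-(7/5):ℝ) :=
      fun n => by positivity
    have hb : ∀ n : ℕ, μ (Ev M n)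
        ≤ ENNReal.ofReal ((Real.exp ((M:ℝ)/(2*C)) + 2) * (n:ℝ) ^ (-(7/5):ℝ))
          + (if n < 1024 then 1 else 0) := by
      intro n
      by_cases h : n < 1024
      · simp only [if_pos h]
        calc μ (Ev M n) ≤ 1 := prob_le_one
          _ ≤ _ := le_add_self
      · have h' : 1024 ≤ n := by omega
        have hmb := measure_bound μ F X hadapt J C hJ hC hbdd hdrift M n h'
        simp only [if_neg h, add_zero]
        rw [← ENNReal.ofReal_toReal (measure_ne_top μ (Ev M n))]
        exact ENNReal.ofReal_le_ofReal hmb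
    have hle : ∑' n, μ (Ev M n)
        ≤ (∑' n : ℕ, ENNReal.ofReal ((Real.exp ((M:ℝ)/(2*C)) + 2) * (n:ℝ) ^ (-(7/5):ℝ)))
          + ∑' n : ℕ, (if n < 1024 then (1:ENNReal) else 0) := by
      calc ∑' n, μ (Ev M n)
          ≤ ∑' n : ℕ, (ENNReal.ofReal ((Real.exp ((M:ℝ)/(2*C)) + 2) * (n:ℝ) ^ (-(7/5):ℝ))
              + (if n < 1024 then (1:ENNReal) else 0)) := ENNReal.tsum_le_tsum hb
        _ = _ := ENNReal.tsum_add
    refine ne_top_of_le_ne_top (ENNReal.add_ne_top.mpr ⟨?_, ?_⟩) hle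
    · rw [← ENNReal.ofReal_tsum_of_nonneg hnn hsummable]
      exact ENNReal.ofReal_ne_top
    · have heq : ∑' n : ℕ, (if n < 1024 then (1:ENNReal) else 0)
          = ∑ n ∈ Finset.range 1024, (if n < 1024 then (1:ENNReal) else 0) := by
        apply tsum_eq_sum
        intro b hb'
        rw [Finset.mem_range] at hb'
        simp [hb']
      rw [heq]
      refine ne_top_of_le_ne_top (b := (1024:ENNReal)) (by simp) ?_
      calc ∑ n ∈ Finset.range 1024, (if n < 1024 then (1:ENNReal) else 0)
          ≤ ∑ _n ∈ Finset.range 1024, (1:ENNReal) :=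
            Finset.sum_le_sum (fun i _ => by split <;> simp)
        _ = 1024 := by simp
  have hae : ∀ᵐ ω ∂μ, ∀ M : ℕ, ω ∉ limsup (fun n => Ev M n) atTop := by
    rw [ae_all_iff]
    intro M
    exact measure_eq_zero_iff_ae_notMem.mp (measure_limsup_atTop_eq_zero (htsum M))
  filter_upwards [hae] with ω hω
  have hM : X 1 ω ≤ ((⌈X 1 ω⌉₊ : ℕ) : ℝ) := Nat.le_ceil _
  have h2 := hω ⌈X 1 ω⌉₊
  rw [mem_limsup_iff_frequently_mem, Filter.not_frequently] at h2
  filter_upwards [h2] with n hn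
  by_contra hlt
  push_neg at hlt
  exact hn ⟨hM, hlt⟩
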